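/- The function ∇φ(z) = 2(z − ε*)·ln((ε − ε*)/(ε − z)) + (z − ε*)²/(ε − z), defined for z ∈ [ε*, ε), satisfies ∇φ(ε*) = 0 and ∇φ(z) → +∞ as z → ε from the left; consequently, by continuity, for every real number c ≥ 0 there exists z ∈ [ε*, ε) with ∇φ(z) = c. -/

import Mathlib

/-- The gradient `∇φ` of the repulsive function, with parameters `a = ε*`,
`b = ε`, given on `[ε*, ε)` by
`∇φ(z) = 2(z − ε*)·ln((ε − ε*)/(ε − z)) + (z − ε*)²/(ε − z)`. -/
noncomputable def gradphi (a b : ℝ) (z : ℝ) : ℝ :=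
  2 * (z - a) * Real.log ((b - a) / (b - z)) + (z - a) ^ 2 / (b - z)

open Filter Topology

lemma gradphi_contAt (a b : ℝ) (hab : a < b) {z : ℝ} (hz : z < b) :
    ContinuousAt (gradphi a b) z := by
  have hbz : (0:ℝ) < b - z := sub_pos.2 hz
  have hba : (0:ℝ) < b - a := sub_pos.2 hab
  have h1 : ContinuousAt (fun z => (b - a) / (b - z)) z :=
    ContinuousAt.div (by fun_prop) (by fun_prop) (ne_of_gt hbz)
  have hpos : (0:ℝ) < (b - a) / (b - z) := div_pos hba hbz
  have hlog : ContinuousAt (fun z => Real.log ((b - a) / (b - z))) z :=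
    h1.log (ne_of_gt hpos)
  unfold gradphi
  exact ((by fun_prop : ContinuousAt (fun z => 2 * (z - a)) z).mul hlog).add
    (ContinuousAt.div (by fun_prop) (by fun_prop) (ne_of_gt hbz))

lemma gradphi_tendsto (a b : ℝ) (hab : a < b) :
    Filter.Tendsto (gradphi a b) (nhdsWithin b (Set.Iio b)) Filter.atTop := by
  have hba : (0:ℝ) < b - a := sub_pos.2 hab
  have hsub : Tendsto (fun z : ℝ => b - z) (𝓝[<] b) (𝓝[>] 0) := by
    apply tendsto_nhdsWithin_of_tendsto_nhds_of_eventually_within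
    · have h : Continuous (fun z : ℝ => b - z) := by fun_prop
      simpa using (h.tendsto b).mono_left nhdsWithin_le_nhds
    · filter_upwards [self_mem_nhdsWithin] with z hz
      exact sub_pos.2 (Set.mem_Iio.1 hz)
  -- first term tends to atTop
  have hlog : Tendsto (fun z : ℝ => Real.log ((b - a) / (b - z))) (𝓝[<] b) atTop := by
    have h2 : Tendsto (fun z : ℝ => Real.log (b - z)) (𝓝[<] b) atBot :=
      Real.tendsto_log_nhdsGT_zero.comp hsub
    have h3 : Tendsto (fun z : ℝ => Real.log (b - a) + -Real.log (b - z)) (𝓝[<] b) atTop :=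
      tendsto_atTop_add_const_left _ _ (tendsto_neg_atBot_atTop.comp h2)
    apply h3.congr'
    filter_upwards [self_mem_nhdsWithin] with z hz
    rw [Real.log_div (ne_of_gt hba) (ne_of_gt (sub_pos.2 (Set.mem_Iio.1 hz)))]
    ring
  have hterm1 : Tendsto (fun z : ℝ => 2 * (z - a) * Real.log ((b - a) / (b - z)))
      (𝓝[<] b) atTop := by
    have hc : Tendsto (fun z : ℝ => 2 * (z - a)) (𝓝[<] b) (𝓝 (2 * (b - a))) := by
      have h : Continuous (fun z : ℝ => 2 * (z - a)) := by fun_prop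
      exact (h.tendsto b).mono_left nhdsWithin_le_nhds
    exact hc.pos_mul_atTop (by linarith) hlog
  have hterm2 : Tendsto (fun z : ℝ => (z - a) ^ 2 / (b - z)) (𝓝[<] b) atTop := by
    have hc : Tendsto (fun z : ℝ => (z - a) ^ 2) (𝓝[<] b) (𝓝 ((b - a) ^ 2)) := by
      have h : Continuous (fun z : ℝ => (z - a) ^ 2) := by fun_prop
      exact (h.tendsto b).mono_left nhdsWithin_le_nhds
    have hinv : Tendsto (fun z : ℝ => (b - z)⁻¹) (𝓝[<] b) atTop :=
      tendsto_inv_nhdsGT_zero.comp hsub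
    have := hc.pos_mul_atTop (by positivity) hinv
    simpa [div_eq_mul_inv] using this
  exact Tendsto.atTop_add_atTop hterm1 hterm2

/-- `∇φ(ε*) = 0`, `∇φ(z) → +∞` as `z → ε⁻`, and consequently by
continuity `∇φ` attains every value `c ≥ 0` on `[ε*, ε)`. -/
theorem gradphi_surjective_onto_nonneg (a b : ℝ) (hab : a < b) :
    gradphi a b a = 0 ∧
      Filter.Tendsto (gradphi a b) (nhdsWithin b (Set.Iio b)) Filter.atTop ∧
      (∀ c ≥ (0 : ℝ), ∃ z ∈ Set.Ico a b, gradphi a b z = c) := by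
  have h0 : gradphi a b a = 0 := by simp [gradphi]
  refine ⟨h0, gradphi_tendsto a b hab, ?_⟩
  intro c hc
  -- find z₀ ∈ (a, b) with gradphi z₀ > c
  have hev : ∀ᶠ z in 𝓝[<] b, gradphi a b z > c :=
    (gradphi_tendsto a b hab).eventually_gt_atTop c
  have hev2 : ∀ᶠ z in 𝓝[<] b, a < z := by
    apply eventually_nhdsWithin_of_eventually_nhds
    exact eventually_gt_nhds hab
  obtain ⟨z₀, hz₀c, hz₀a, hz₀b⟩ := (hev.and (hev2.and self_mem_nhdsWithin)).exists
  have hcont : ContinuousOn (gradphi a b) (Set.Icc a z₀) := fun z hz =>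
    (gradphi_contAt a b hab (lt_of_le_of_lt hz.2 hz₀b)).continuousWithinAt
  have hmem : c ∈ Set.Icc (gradphi a b a) (gradphi a b z₀) := by
    rw [h0]; exact ⟨hc, le_of_lt hz₀c⟩
  obtain ⟨z, hz, hzc⟩ := intermediate_value_Icc (le_of_lt hz₀a) hcont hmem
  exact ⟨z, ⟨hz.1, lt_of_le_of_lt hz.2 hz₀b⟩, hzc⟩
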